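/- In the algebra Mat(K) of block matrices A = (A_{i,j})_{i,j≥0} with A_{i,j}: Sym^j(K^m) → Sym^i(K^n), equipped with the product (A ⊙ B)_{i,j} = ∑_{0≤i_1≤i, 0≤j_1≤j} C(j,j_1) A_{i_1,j_1} ⊙ B_{i-i_1,j-j_1}, the operation ⊙ is commutative and associative, the matrix 1 with (1)_{0,0} = 1_K and all other blocks zero is the identity, and the algebra has no zero divisors (A ⊙ B = 0 implies A = 0 or B = 0). -/

import Mathlib

/-- Multi-indices of degree `k` in `n` variables: the monomial basis of `Sym^k(K^n)`. -/
abbrev Idx (n k : ℕ) := {d : Fin n → Fin (k + 1) // ∑ i, (d i : ℕ) = k}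

/-- Symmetric (monomial) product of two vectors in symmetric powers of `K^n`. -/
def vmul {K : Type} [Field K] {n a b : ℕ} (x : Idx n a → K) (y : Idx n b → K) :
    Idx n (a + b) → K :=
  fun r => ∑ p : Idx n a, ∑ q : Idx n b,
    if (∀ c, (p.1 c : ℕ) + (q.1 c : ℕ) = (r.1 c : ℕ)) then x p * y q else 0

/-- The generalized symmetric product of finite matrices between symmetric powers. -/
def msym {K : Type} [Field K] {n i1 j1 i2 j2 : ℕ}
    (A : Matrix (Idx n i1) (Idx n j1) K) (B : Matrix (Idx n i2) (Idx n j2) K) :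
    Matrix (Idx n (i1 + i2)) (Idx n (j1 + j2)) K :=
  Matrix.of fun r k =>
    (((j1 + j2).choose j1 : K))⁻¹ *
      ∑ p : Idx n j1, ∑ q : Idx n j2,
        if (∀ c, (p.1 c : ℕ) + (q.1 c : ℕ) = (k.1 c : ℕ))
        then (∏ c, ((k.1 c : ℕ).choose (p.1 c : ℕ) : K)) *
          vmul (fun a => A a p) (fun b => B b q) r
        else 0

/-- Degree-cast of a matrix between symmetric powers. -/
def castM {K : Type} [Field K] {n a b a' b' : ℕ} (h1 : a = a') (h2 : b = b')
    (M : Matrix (Idx n a) (Idx n b) K) : Matrix (Idx n a') (Idx n b') K :=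
  Matrix.reindex (Equiv.cast (congrArg (Idx n) h1)) (Equiv.cast (congrArg (Idx n) h2)) M

/-- The algebra `Mat(K)` of infinite block matrices `A = (A_{i,j})_{i,j ≥ 0}` with
`A_{i,j} : Sym^j(K^n) → Sym^i(K^n)`. -/
abbrev BlockMat (K : Type) [Field K] (n : ℕ) :=
  ∀ i j : ℕ, Matrix (Idx n i) (Idx n j) K

/-- The convolution-type symmetric product on `Mat(K)`:
`(A ⊙ B)_{i,j} = ∑_{i₁ ≤ i, j₁ ≤ j} C(j,j₁) A_{i₁,j₁} ⊙ B_{i-i₁,j-j₁}`. -/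
def bprod {K : Type} [Field K] {n : ℕ} (A B : BlockMat K n) : BlockMat K n :=
  fun i j => ∑ i1 : Fin (i + 1), ∑ j1 : Fin (j + 1),
    (j.choose j1 : K) •
      castM (Nat.add_sub_cancel' (Nat.lt_succ_iff.mp i1.isLt))
        (Nat.add_sub_cancel' (Nat.lt_succ_iff.mp j1.isLt))
        (msym (A i1 j1) (B (i - i1) (j - j1)))

/-- The identity element of `(Mat(K), +, ⊙)`: zero everywhere except the `(0,0)`
block, which is `1_K`. -/
def bone {K : Type} [Field K] (n : ℕ) : BlockMat K n :=
  fun i j =>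
    if h : i = 0 ∧ j = 0
    then castM h.1.symm h.2.symm (1 : Matrix (Idx n 0) (Idx n 0) K)
    else 0

section
variable {K : Type} [Field K] {n : ℕ}

def castIdx {n a a' : ℕ} (h : a = a') (d : Idx n a) : Idx n a' := h ▸ d

@[simp] lemma castIdx_val {n a a' : ℕ} (h : a = a') (d : Idx n a) (c : Fin n) :
    ((castIdx h d).1 c : ℕ) = (d.1 c : ℕ) := by subst h; rfl

lemma idx_ext {n a : ℕ} {d e : Idx n a} (h : ∀ c, (d.1 c : ℕ) = (e.1 c : ℕ)) : d = e := by
  apply Subtype.ext; funext c; exact Fin.ext (h c)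

lemma castM_apply {n a b a' b' : ℕ} (h1 : a = a') (h2 : b = b')
    (M : Matrix (Idx n a) (Idx n b) K) (r : Idx n a') (k : Idx n b') :
    castM h1 h2 M r k = M (castIdx h1.symm r) (castIdx h2.symm k) := by
  subst h1; subst h2; rfl

def idxOf {n : ℕ} (f : Fin n → ℕ) : Idx n (∑ c, f c) :=
  ⟨fun c => ⟨f c, Nat.lt_succ_of_le (Finset.single_le_sum (fun i _ => Nat.zero_le _) (Finset.mem_univ c))⟩, rfl⟩

@[simp] lemma idxOf_val {n : ℕ} (f : Fin n → ℕ) (c : Fin n) : ((idxOf f).1 c : ℕ) = f c := rfl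

lemma bprod_apply [CharZero K] (A B : BlockMat K n) (i j : ℕ) (r : Idx n i) (k : Idx n j) :
    bprod A B i j r k = ∑ i1 : Fin (i+1), ∑ j1 : Fin (j+1),
      ∑ p : Idx n (j1:ℕ), ∑ q : Idx n (j - j1), ∑ p' : Idx n (i1:ℕ), ∑ q' : Idx n (i - i1),
        if (∀ c, (p.1 c:ℕ) + (q.1 c:ℕ) = (k.1 c:ℕ)) ∧ (∀ c, (p'.1 c:ℕ) + (q'.1 c:ℕ) = (r.1 c:ℕ))
        then (∏ c, ((k.1 c:ℕ).choose (p.1 c:ℕ) : K)) * (A i1 j1 p' p * B (i-i1) (j-j1) q' q)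
        else 0 := by
  unfold bprod
  rw [Matrix.sum_apply r k]
  refine Finset.sum_congr rfl fun i1 _ => ?_
  rw [Matrix.sum_apply r k]
  refine Finset.sum_congr rfl fun j1 _ => ?_
  have hi1 : (i1 : ℕ) ≤ i := Nat.lt_succ_iff.mp i1.isLt
  have hj1 : (j1 : ℕ) ≤ j := Nat.lt_succ_iff.mp j1.isLt
  have hj : (j1 : ℕ) + (j - j1) = j := Nat.add_sub_cancel' hj1
  rw [Matrix.smul_apply, castM_apply]
  show (j.choose j1 : K) • (msym (A i1 j1) (B (i-i1) (j-j1)) _ _) = _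
  rw [msym]
  simp only [Matrix.of_apply, castIdx_val, hj]
  rw [smul_eq_mul, ← mul_assoc, mul_inv_cancel₀ (by exact_mod_cast (Nat.choose_pos hj1).ne'), one_mul]
  refine Finset.sum_congr rfl fun p _ => ?_
  refine Finset.sum_congr rfl fun q _ => ?_
  by_cases h1 : (∀ c, (p.1 c:ℕ) + (q.1 c:ℕ) = (k.1 c:ℕ))
  · simp only [h1, forall_true_iff, if_true, true_and, vmul, castIdx_val,
      Finset.mul_sum, mul_ite, mul_zero]
  · simp [h1]

end

variable {K : Type} [Field K] {n : ℕ}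

lemma blockMat_congr (A : BlockMat K n) {i i' j j' : ℕ} (hi : i = i') (hj : j = j')
    {r : Idx n i} {r' : Idx n i'} {k : Idx n j} {k' : Idx n j'}
    (hr : ∀ c, (r.1 c : ℕ) = (r'.1 c : ℕ)) (hk : ∀ c, (k.1 c : ℕ) = (k'.1 c : ℕ)) :
    A i j r k = A i' j' r' k' := by
  subst hi; subst hj; rw [idx_ext hr, idx_ext hk]

noncomputable def Phi (A : BlockMat K n) : MvPowerSeries (Fin n ⊕ Fin n) K :=
  fun m => (∏ c, ((m (Sum.inr c)).factorial : K))⁻¹ *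
    A (∑ c, m (Sum.inl c)) (∑ c, m (Sum.inr c))
      (idxOf fun c => m (Sum.inl c)) (idxOf fun c => m (Sum.inr c))

lemma Phi_apply (A : BlockMat K n) (m : (Fin n ⊕ Fin n) →₀ ℕ) :
    Phi A m = (∏ c, ((m (Sum.inr c)).factorial : K))⁻¹ *
    A (∑ c, m (Sum.inl c)) (∑ c, m (Sum.inr c))
      (idxOf fun c => m (Sum.inl c)) (idxOf fun c => m (Sum.inr c)) := rfl

lemma fact_prod_ne [CharZero K] (f : Fin n → ℕ) : (∏ c, ((f c).factorial : K)) ≠ 0 :=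
  Finset.prod_ne_zero_iff.mpr fun c _ => Nat.cast_ne_zero.mpr (Nat.factorial_ne_zero _)

lemma Phi_sub (A B : BlockMat K n) : Phi (A - B) = Phi A - Phi B := by
  funext m
  show Phi (A - B) m = Phi A m - Phi B m
  simp only [Phi_apply, Pi.sub_apply, Matrix.sub_apply, mul_sub]

lemma Phi_zero : Phi (0 : BlockMat K n) = 0 := by
  have := Phi_sub (0 : BlockMat K n) 0
  simpa using this

lemma Phi_smul (c : K) (A : BlockMat K n) : Phi (c • A) = c • Phi A := by
  funext m
  show Phi (c • A) m = c • Phi A m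
  simp only [Phi_apply, Pi.smul_apply, Matrix.smul_apply, smul_eq_mul]
  ring

lemma Phi_inj [CharZero K] : Function.Injective (Phi (K := K) (n := n)) := by
  have key : ∀ A : BlockMat K n, Phi A = 0 → A = 0 := by
    intro A h
    funext i j
    ext r k
    set m : (Fin n ⊕ Fin n) →₀ ℕ :=
      Finsupp.equivFunOnFinite.symm (Sum.elim (fun c => (r.1 c : ℕ)) (fun c => (k.1 c : ℕ))) with hm
    have h0 : Phi A m = 0 := by rw [h]; rfl
    rw [Phi_apply] at h0
    have hval : (∀ c, m (Sum.inl c) = (r.1 c : ℕ)) ∧ ∀ c, m (Sum.inr c) = (k.1 c : ℕ) := by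
      constructor <;> intro c <;> simp [hm]
    have hA : A (∑ c, m (Sum.inl c)) (∑ c, m (Sum.inr c))
        (idxOf fun c => m (Sum.inl c)) (idxOf fun c => m (Sum.inr c)) = 0 := by
      have := mul_eq_zero.mp h0
      rcases this with h' | h'
      · exact absurd h' (inv_ne_zero (fact_prod_ne _))
      · exact h'
    have hi : (∑ c, m (Sum.inl c)) = i := by
      rw [Finset.sum_congr rfl fun c _ => hval.1 c]; exact r.2
    have hj : (∑ c, m (Sum.inr c)) = j := by
      rw [Finset.sum_congr rfl fun c _ => hval.2 c]; exact k.2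
    have hAk : A i j r k = A (∑ c, m (Sum.inl c)) (∑ c, m (Sum.inr c))
        (idxOf fun c => m (Sum.inl c)) (idxOf fun c => m (Sum.inr c)) := by
      refine blockMat_congr A hi.symm hj.symm ?_ ?_ <;> intro c <;>
        simp [hval.1 c, hval.2 c]
    have goal0 : A i j r k = 0 := by rw [hAk]; exact hA
    simpa using goal0
  intro A B h
  have : A - B = 0 := key _ (by rw [Phi_sub, h, sub_self])
  exact sub_eq_zero.mp this

instance idx_zero_subsingleton : Subsingleton (Idx n 0) :=
  ⟨fun a b => idx_ext fun c => by
    have ha := Finset.sum_eq_zero_iff.mp a.2 c (Finset.mem_univ c)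
    have hb := Finset.sum_eq_zero_iff.mp b.2 c (Finset.mem_univ c)
    omega⟩

lemma bone_apply_zero {i j : ℕ} (hi : i = 0) (hj : j = 0) (r : Idx n i) (k : Idx n j) :
    bone (K := K) n i j r k = 1 := by
  subst hi; subst hj
  rw [bone, dif_pos ⟨rfl, rfl⟩, castM_apply,
    Subsingleton.elim (castIdx _ _ : Idx n 0) (castIdx _ _), Matrix.one_apply_eq]
  rfl

lemma Phi_one [CharZero K] : Phi (bone n : BlockMat K n) = 1 := by
  apply MvPowerSeries.ext
  intro m
  rw [MvPowerSeries.coeff_one, MvPowerSeries.coeff_apply]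
  by_cases hm : m = 0
  · subst hm
    rw [if_pos rfl, Phi_apply, bone_apply_zero (by simp) (by simp)]
    simp
  · rw [if_neg hm, Phi_apply, bone]
    have : ¬ ((∑ c, m (Sum.inl c)) = 0 ∧ (∑ c, m (Sum.inr c)) = 0) := by
      intro ⟨h1, h2⟩
      apply hm
      ext s
      rcases s with c | c
      · exact Finset.sum_eq_zero_iff.mp h1 c (Finset.mem_univ c)
      · exact Finset.sum_eq_zero_iff.mp h2 c (Finset.mem_univ c)
    rw [dif_neg this]
    simp

variable {K : Type} [Field K] {n : ℕ}

lemma scalar_helper {C P Q x y : K} (hC : C ≠ 0) :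
    (C * (P * Q))⁻¹ * (C * (x * y)) = P⁻¹ * x * (Q⁻¹ * y) := by
  rw [mul_inv, mul_inv,
    show C⁻¹ * (P⁻¹ * Q⁻¹) * (C * (x * y)) = (C⁻¹ * C) * (P⁻¹ * x * (Q⁻¹ * y)) from by ring,
    inv_mul_cancel₀ hC, one_mul]

lemma fiber [CharZero K] (A B : BlockMat K n) (m : (Fin n ⊕ Fin n) →₀ ℕ) (a b : ℕ) :
    (∑ p : Idx n b, ∑ q : Idx n ((∑ c, m (Sum.inr c)) - b),
      ∑ p' : Idx n a, ∑ q' : Idx n ((∑ c, m (Sum.inl c)) - a),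
      if (∀ c, (p.1 c : ℕ) + (q.1 c : ℕ) = m (Sum.inr c)) ∧
          (∀ c, (p'.1 c : ℕ) + (q'.1 c : ℕ) = m (Sum.inl c))
       then (∏ c, ((m (Sum.inr c)).factorial : K))⁻¹ *
         ((∏ c, ((m (Sum.inr c)).choose (p.1 c : ℕ) : K)) *
           (A a b p' p * B ((∑ c, m (Sum.inl c)) - a) ((∑ c, m (Sum.inr c)) - b) q' q))
       else 0)
    = ∑ x ∈ (Finset.HasAntidiagonal.antidiagonal m).filter
        (fun x => (∑ c, x.1 (Sum.inl c)) = a ∧ (∑ c, x.1 (Sum.inr c)) = b),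
        Phi A x.1 * Phi B x.2 := by
  classical
  -- collapse nested sums into a filtered sum over a product type
  have L1 : (∑ p : Idx n b, ∑ q : Idx n ((∑ c, m (Sum.inr c)) - b), ∑ p' : Idx n a, ∑ q' : Idx n ((∑ c, m (Sum.inl c)) - a),
      if (∀ c, (p.1 c : ℕ) + (q.1 c : ℕ) = m (Sum.inr c)) ∧
          (∀ c, (p'.1 c : ℕ) + (q'.1 c : ℕ) = m (Sum.inl c))
       then (∏ c, ((m (Sum.inr c)).factorial : K))⁻¹ *
         ((∏ c, ((m (Sum.inr c)).choose (p.1 c : ℕ) : K)) *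
           (A a b p' p * B ((∑ c, m (Sum.inl c)) - a) ((∑ c, m (Sum.inr c)) - b) q' q))
       else 0)
      = ∑ y ∈ (Finset.univ.filter
          (fun y : Idx n b × Idx n ((∑ c, m (Sum.inr c)) - b) × Idx n a × Idx n ((∑ c, m (Sum.inl c)) - a) =>
            (∀ c, (y.1.1 c : ℕ) + (y.2.1.1 c : ℕ) = m (Sum.inr c)) ∧
            (∀ c, (y.2.2.1.1 c : ℕ) + (y.2.2.2.1 c : ℕ) = m (Sum.inl c)))),
          (∏ c, ((m (Sum.inr c)).factorial : K))⁻¹ *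
            ((∏ c, ((m (Sum.inr c)).choose (y.1.1 c : ℕ) : K)) *
              (A a b y.2.2.1 y.1 * B ((∑ c, m (Sum.inl c)) - a) ((∑ c, m (Sum.inr c)) - b) y.2.2.2 y.2.1)) := by
    rw [Finset.sum_filter]
    simp only [Fintype.sum_prod_type]
  rw [L1]
  refine Finset.sum_bij
    (i := fun y _ =>
      (Finsupp.equivFunOnFinite.symm
          (Sum.elim (fun c => (y.2.2.1.1 c : ℕ)) (fun c => (y.1.1 c : ℕ))),
        Finsupp.equivFunOnFinite.symm
          (Sum.elim (fun c => (y.2.2.2.1 c : ℕ)) (fun c => (y.2.1.1 c : ℕ)))))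
    ?_ ?_ ?_ ?_
  · -- membership
    rintro ⟨p, q, p', q'⟩ hy
    rw [Finset.mem_filter] at hy ⊢
    dsimp only at hy
    obtain ⟨-, h1, h2⟩ := hy
    refine ⟨Finset.HasAntidiagonal.mem_antidiagonal.mpr ?_, ?_, ?_⟩
    · ext s
      rcases s with c | c <;>
        simp [Finsupp.add_apply, h1 c, h2 c]
    · simpa using p'.2
    · simpa using p.2
  · -- injectivity
    rintro ⟨p1, q1, p1', q1'⟩ h1 ⟨p2, q2, p2', q2'⟩ h2 heq
    rw [Prod.mk.injEq] at heq
    obtain ⟨e1, e2⟩ := heq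
    have e1' := fun s => DFunLike.congr_fun e1 s
    have e2' := fun s => DFunLike.congr_fun e2 s
    simp only [Finsupp.coe_equivFunOnFinite_symm] at e1' e2'
    refine Prod.ext (idx_ext fun c => ?_) (Prod.ext (idx_ext fun c => ?_)
      (Prod.ext (idx_ext fun c => ?_) (idx_ext fun c => ?_))) <;>
      [exact e1' (Sum.inr c); exact e2' (Sum.inr c); exact e1' (Sum.inl c);
        exact e2' (Sum.inl c)]
  · -- surjectivity
    rintro ⟨x1, x2⟩ hx
    rw [Finset.mem_filter, Finset.HasAntidiagonal.mem_antidiagonal] at hx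
    dsimp only at hx
    obtain ⟨hadd, hsa, hsb⟩ := hx
    have hval : ∀ s, x1 s + x2 s = m s := fun s => by
      rw [← Finsupp.add_apply, hadd]
    have hq : (∑ c, x2 (Sum.inr c)) = (∑ c, m (Sum.inr c)) - b := by
      have : (∑ c, x1 (Sum.inr c)) + (∑ c, x2 (Sum.inr c)) = (∑ c, m (Sum.inr c)) := by
        rw [← Finset.sum_add_distrib]; exact Finset.sum_congr rfl fun c _ => hval _
      omega
    have hq' : (∑ c, x2 (Sum.inl c)) = (∑ c, m (Sum.inl c)) - a := by
      have : (∑ c, x1 (Sum.inl c)) + (∑ c, x2 (Sum.inl c)) = (∑ c, m (Sum.inl c)) := by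
        rw [← Finset.sum_add_distrib]; exact Finset.sum_congr rfl fun c _ => hval _
      omega
    refine ⟨(castIdx hsb (idxOf fun c => x1 (Sum.inr c)),
        castIdx hq (idxOf fun c => x2 (Sum.inr c)),
        castIdx hsa (idxOf fun c => x1 (Sum.inl c)),
        castIdx hq' (idxOf fun c => x2 (Sum.inl c))), ?_, ?_⟩
    · rw [Finset.mem_filter]
      exact ⟨Finset.mem_univ _, fun c => by simp [hval (Sum.inr c)],
        fun c => by simp [hval (Sum.inl c)]⟩
    · rw [Prod.mk.injEq]
      constructor <;> · apply Finsupp.ext; intro s; rcases s with c | c <;>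
        simp only [Finsupp.coe_equivFunOnFinite_symm, Sum.elim_inl, Sum.elim_inr,
          castIdx_val, idxOf_val]
  · -- value equality
    rintro ⟨p, q, p', q'⟩ hy
    rw [Finset.mem_filter] at hy
    dsimp only at hy
    obtain ⟨-, h1, h2⟩ := hy
    rw [Phi_apply, Phi_apply]
    simp only [Finsupp.coe_equivFunOnFinite_symm, Sum.elim_inl, Sum.elim_inr]
    have sA1 : (∑ c, (p'.1 c : ℕ)) = a := p'.2
    have sA2 : (∑ c, (p.1 c : ℕ)) = b := p.2
    have sB1 : (∑ c, (q'.1 c : ℕ)) = (∑ c, m (Sum.inl c)) - a := q'.2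
    have sB2 : (∑ c, (q.1 c : ℕ)) = (∑ c, m (Sum.inr c)) - b := q.2
    have eA : A (∑ c, (p'.1 c : ℕ)) (∑ c, (p.1 c : ℕ))
        (idxOf fun c => (p'.1 c : ℕ)) (idxOf fun c => (p.1 c : ℕ)) = A a b p' p :=
      blockMat_congr A sA1 sA2 (fun c => by simp) (fun c => by simp)
    have eB : B (∑ c, (q'.1 c : ℕ)) (∑ c, (q.1 c : ℕ))
        (idxOf fun c => (q'.1 c : ℕ)) (idxOf fun c => (q.1 c : ℕ)) = B ((∑ c, m (Sum.inl c)) - a) ((∑ c, m (Sum.inr c)) - b) q' q :=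
      blockMat_congr B sB1 sB2 (fun c => by simp) (fun c => by simp)
    rw [eA, eB]
    have key : (∏ c, ((m (Sum.inr c)).factorial : K)) =
        (∏ c, ((m (Sum.inr c)).choose (p.1 c : ℕ) : K)) *
          ((∏ c, ((p.1 c : ℕ).factorial : K)) * (∏ c, ((q.1 c : ℕ).factorial : K))) := by
      rw [← Finset.prod_mul_distrib, ← Finset.prod_mul_distrib]
      refine Finset.prod_congr rfl fun c _ => ?_
      rw [← Nat.cast_mul, ← Nat.cast_mul]
      congr 1
      have hc : (p.1 c : ℕ) ≤ m (Sum.inr c) := by have := h1 c; omega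
      have hqc : (q.1 c : ℕ) = m (Sum.inr c) - (p.1 c : ℕ) := by have := h1 c; omega
      rw [hqc, ← mul_assoc]
      exact (Nat.choose_mul_factorial_mul_factorial hc).symm
    have hC : (∏ c, ((m (Sum.inr c)).choose (p.1 c : ℕ) : K)) ≠ 0 :=
      Finset.prod_ne_zero_iff.mpr fun c _ => by
        have hc : (p.1 c : ℕ) ≤ m (Sum.inr c) := by have := h1 c; omega
        exact Nat.cast_ne_zero.mpr (Nat.choose_pos hc).ne'
    rw [key]
    exact scalar_helper hC

variable {K : Type} [Field K] {n : ℕ}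

set_option maxHeartbeats 1000000 in
lemma Phi_mul [CharZero K] (A B : BlockMat K n) :
    Phi (bprod A B) = Phi A * Phi B := by
  classical
  apply MvPowerSeries.ext; intro m
  rw [MvPowerSeries.coeff_mul]
  simp only [MvPowerSeries.coeff_apply]
  rw [Phi_apply, bprod_apply]
  rw [← Finset.sum_fiberwise_of_maps_to
    (g := fun x : ((Fin n ⊕ Fin n) →₀ ℕ) × ((Fin n ⊕ Fin n) →₀ ℕ) =>
      ((⟨min (∑ c, x.1 (Sum.inl c)) (∑ c, m (Sum.inl c)), by omega⟩ :
          Fin ((∑ c, m (Sum.inl c)) + 1)),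
       (⟨min (∑ c, x.1 (Sum.inr c)) (∑ c, m (Sum.inr c)), by omega⟩ :
          Fin ((∑ c, m (Sum.inr c)) + 1))))
    (t := Finset.univ) (fun x _ => Finset.mem_univ _) (fun x => Phi A x.1 * Phi B x.2)]
  rw [Fintype.sum_prod_type]
  simp only [Finset.mul_sum, mul_ite, mul_zero]
  refine Finset.sum_congr rfl fun i1 _ => Finset.sum_congr rfl fun j1 _ => ?_
  have hi1 : (i1 : ℕ) ≤ ∑ c, m (Sum.inl c) := Nat.lt_succ_iff.mp i1.isLt
  have hj1 : (j1 : ℕ) ≤ ∑ c, m (Sum.inr c) := Nat.lt_succ_iff.mp j1.isLt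
  have hiff : ∀ x ∈ Finset.HasAntidiagonal.antidiagonal m,
      ((⟨min (∑ c, x.1 (Sum.inl c)) (∑ c, m (Sum.inl c)), by omega⟩ :
          Fin ((∑ c, m (Sum.inl c)) + 1)),
       (⟨min (∑ c, x.1 (Sum.inr c)) (∑ c, m (Sum.inr c)), by omega⟩ :
          Fin ((∑ c, m (Sum.inr c)) + 1))) = (i1, j1) ↔
      ((∑ c, x.1 (Sum.inl c)) = (i1 : ℕ) ∧ (∑ c, x.1 (Sum.inr c)) = (j1 : ℕ)) := by
    intro x hx
    have hadd := Finset.HasAntidiagonal.mem_antidiagonal.mp hx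
    have hl : (∑ c, x.1 (Sum.inl c)) ≤ ∑ c, m (Sum.inl c) :=
      Finset.sum_le_sum fun c _ => by
        have : x.1 (Sum.inl c) + x.2 (Sum.inl c) = m (Sum.inl c) := by
          rw [← Finsupp.add_apply, hadd]
        omega
    have hr : (∑ c, x.1 (Sum.inr c)) ≤ ∑ c, m (Sum.inr c) :=
      Finset.sum_le_sum fun c _ => by
        have : x.1 (Sum.inr c) + x.2 (Sum.inr c) = m (Sum.inr c) := by
          rw [← Finsupp.add_apply, hadd]
        omega
    rw [Prod.mk.injEq, Fin.ext_iff, Fin.ext_iff]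
    simp only []
    rw [min_eq_left hl, min_eq_left hr]
  rw [Finset.filter_congr hiff]
  exact fiber A B m i1 j1

/-- `(Mat(K), +, ⊙)` is a commutative unital associative `K`-algebra and an integral
domain: `⊙` is commutative and associative, compatible with scalars, `bone` is its
identity, and there are no zero divisors. -/
theorem blockMat_integral_domain (K : Type) [Field K] [CharZero K] (n : ℕ) :
    (∀ A B : BlockMat K n, bprod A B = bprod B A) ∧
    (∀ A B C : BlockMat K n, bprod (bprod A B) C = bprod A (bprod B C)) ∧
    (∀ (c : K) (A B : BlockMat K n), bprod (c • A) B = c • bprod A B) ∧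
    (∀ A : BlockMat K n, bprod (bone n) A = A) ∧
    (∀ A B : BlockMat K n, bprod A B = 0 → A = 0 ∨ B = 0) := by
  refine ⟨?_, ?_, ?_, ?_, ?_⟩
  · intro A B; apply Phi_inj; rw [Phi_mul, Phi_mul, mul_comm]
  · intro A B C; apply Phi_inj; rw [Phi_mul, Phi_mul, Phi_mul, Phi_mul, mul_assoc]
  · intro c A B; apply Phi_inj; rw [Phi_mul, Phi_smul, Phi_smul, Phi_mul, smul_mul_assoc]
  · intro A; apply Phi_inj; rw [Phi_mul, Phi_one, one_mul]
  · intro A B h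
    have h0 : Phi A * Phi B = 0 := by rw [← Phi_mul, h, Phi_zero]
    rcases mul_eq_zero.mp h0 with h' | h'
    · exact Or.inl (Phi_inj (h'.trans Phi_zero.symm))
    · exact Or.inr (Phi_inj (h'.trans Phi_zero.symm))
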